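/- Let λ_{μ,ν}(x) = (ν − (μ+1)/2 + √((ν − (μ+1)/2)² + x²))/x for x > 0. Then for all x > 0: (1) for every real ν, K_ν(x)/K_{ν−1}(x) < λ_{−1,ν}(x) = (ν + √(ν² + x²))/x; (2) if ν > 1/2 then K_ν(x)/K_{ν−1}(x) < λ_{0,ν}(x) = (ν − 1/2 + √((ν − 1/2)² + x²))/x; (3) for every real ν, K_ν(x)/K_{ν−1}(x) > λ_{1,ν}(x) = (ν − 1 + √((ν − 1)² + x²))/x. Moreover K_ν(x)/K_{ν−1}(x) = λ_{0,ν}(x) = 1 when ν = 1/2. -/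

import Mathlib

/-- The modified Bessel function of the second kind,
`K_ν(x) = ∫_0^∞ e^{-x cosh t} cosh(ν t) dt`. -/
noncomputable def besselK (ν x : ℝ) : ℝ :=
  ∫ t in Set.Ioi (0 : ℝ), Real.exp (-x * Real.cosh t) * Real.cosh (ν * t)

open MeasureTheory Set Real Filter

lemma integrable_exp_lin_sub_sq (a b : ℝ) (ha : 0 < a) :
    Integrable (fun t : ℝ => Real.exp (b * t - a * t ^ 2)) := by
  have h : (fun t : ℝ => Real.exp (b * t - a * t ^ 2))
      = fun t => Real.exp (b ^ 2 / (4 * a)) * Real.exp (-a * (t - b / (2 * a)) ^ 2) := by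
    funext t
    rw [← Real.exp_add]
    congr 1
    field_simp
    ring
  rw [h]
  exact ((integrable_exp_neg_mul_sq ha).comp_sub_right (b / (2 * a))).const_mul _

lemma cosh_quad_le (t : ℝ) (ht : 0 ≤ t) : 1/2 + t^2/8 ≤ Real.cosh t := by
  have h1 : (1 + t/2)^2 ≤ Real.exp t := by
    have := Real.add_one_le_exp (t/2)
    calc (1 + t/2)^2 ≤ (Real.exp (t/2))^2 := by
          apply pow_le_pow_left₀ (by linarith) (by linarith)
      _ = Real.exp t := by rw [← Real.exp_nat_mul]; ring_nf
  have h2 : Real.exp t / 2 ≤ Real.cosh t := by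
    rw [Real.cosh_eq]
    have := (Real.exp_pos (-t)).le
    linarith
  nlinarith

lemma besselK_integrand_le (ν x : ℝ) (hx : 0 < x) {t : ℝ} (ht : 0 ≤ t) :
    Real.exp (-x * Real.cosh t) * Real.cosh (ν * t) ≤
      Real.exp (-(x/2)) * Real.exp (|ν| * t - x/8 * t ^ 2) := by
  have hc : Real.cosh (ν * t) ≤ Real.exp (|ν| * t) := by
    rw [Real.cosh_eq]
    have h1 : Real.exp (ν * t) ≤ Real.exp (|ν| * t) := by
      apply Real.exp_le_exp.2
      have : ν ≤ |ν| := le_abs_self ν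
      nlinarith [abs_nonneg ν]
    have h2 : Real.exp (-(ν * t)) ≤ Real.exp (|ν| * t) := by
      apply Real.exp_le_exp.2
      have : -ν ≤ |ν| := neg_le_abs ν
      nlinarith [abs_nonneg ν]
    linarith
  calc Real.exp (-x * Real.cosh t) * Real.cosh (ν * t)
      ≤ Real.exp (-x * Real.cosh t) * Real.exp (|ν| * t) :=
        mul_le_mul_of_nonneg_left hc (Real.exp_pos _).le
    _ = Real.exp (-x * Real.cosh t + |ν| * t) := (Real.exp_add _ _).symm
    _ ≤ Real.exp (-(x/2)) * Real.exp (|ν| * t - x/8 * t ^ 2) := by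
        rw [← Real.exp_add]
        apply Real.exp_le_exp.2
        have := cosh_quad_le t ht
        nlinarith

lemma besselK_integrand_integrableOn (ν x : ℝ) (hx : 0 < x) :
    IntegrableOn (fun t : ℝ => Real.exp (-x * Real.cosh t) * Real.cosh (ν * t)) (Ioi 0) := by
  apply Integrable.mono' (((integrable_exp_lin_sub_sq (x/8) |ν| (by linarith)).const_mul
    (Real.exp (-(x/2)))).restrict (s := Ioi 0))
  · exact (((Real.continuous_exp.comp (continuous_const.mul Real.continuous_cosh)).mul
      (Real.continuous_cosh.comp (continuous_const.mul continuous_id))).aestronglyMeasurable)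
  · filter_upwards [ae_restrict_mem measurableSet_Ioi] with t ht
    rw [Real.norm_eq_abs, abs_of_nonneg (by positivity)]
    exact besselK_integrand_le ν x hx (le_of_lt ht)

lemma besselK_pos (ν x : ℝ) (hx : 0 < x) : 0 < besselK ν x := by
  rw [besselK, MeasureTheory.setIntegral_pos_iff_support_of_nonneg_ae
    (by filter_upwards with t; positivity) (besselK_integrand_integrableOn ν x hx)]
  have hs : Function.support (fun t : ℝ => Real.exp (-x * Real.cosh t) * Real.cosh (ν * t))
      ∩ Ioi 0 = Ioi 0 := by
    apply inter_eq_right.2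
    intro t _
    simp only [Function.mem_support]
    positivity
  rw [hs]
  simp [Real.volume_Ioi]

lemma cosh_mul_cosh (A B : ℝ) :
    Real.cosh A * Real.cosh B = (Real.cosh (A + B) + Real.cosh (A - B)) / 2 := by
  rw [Real.cosh_add, Real.cosh_sub]; ring

lemma sinh_mul_sinh (A B : ℝ) :
    Real.sinh A * Real.sinh B = (Real.cosh (A + B) - Real.cosh (A - B)) / 2 := by
  rw [Real.cosh_add, Real.cosh_sub]; ring

-- strict integral inequality helper
lemma setIntegral_lt_of_lt_on {f g : ℝ → ℝ}
    (hf : IntegrableOn f (Ioi 0)) (hg : IntegrableOn g (Ioi 0))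
    (h : ∀ t ∈ Ioi (0:ℝ), f t < g t) :
    ∫ t in Ioi (0:ℝ), f t < ∫ t in Ioi (0:ℝ), g t := by
  have hint : IntegrableOn (fun t => g t - f t) (Ioi (0:ℝ)) := hg.sub hf
  have : 0 < ∫ t in Ioi (0:ℝ), (g t - f t) := by
    rw [MeasureTheory.setIntegral_pos_iff_support_of_nonneg_ae
      (by filter_upwards [ae_restrict_mem measurableSet_Ioi] with t ht;
          exact sub_nonneg.2 (h t ht).le) hint]
    have hs : Function.support (fun t => g t - f t) ∩ Ioi 0 = Ioi 0 := by
      apply inter_eq_right.2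
      intro t ht
      simp only [Function.mem_support]
      exact sub_ne_zero.2 (h t ht).ne'
    rw [hs]; simp [Real.volume_Ioi]
  have := MeasureTheory.integral_sub hg hf
  linarith [this ▸ ‹0 < ∫ t in Ioi (0:ℝ), (g t - f t)›]

lemma besselK_turan (a b x : ℝ) (hx : 0 < x) (hab : a ≠ b) :
    besselK ((a + b) / 2) x ^ 2 < besselK a x * besselK b x := by
  set Ka := besselK a x with hKa
  set Kb := besselK b x with hKb
  have hKap : 0 < Ka := besselK_pos a x hx
  have hKbp : 0 < Kb := besselK_pos b x hx
  set θ : ℝ := Real.sqrt (Kb / Ka) with hθdef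
  have hθ : 0 < θ := Real.sqrt_pos.2 (by positivity)
  -- pointwise inequality
  have hpt : ∀ t ∈ Ioi (0:ℝ),
      Real.exp (-x * Real.cosh t) * Real.cosh ((a + b) / 2 * t) <
      (θ * (Real.exp (-x * Real.cosh t) * Real.cosh (a * t))
        + (Real.exp (-x * Real.cosh t) * Real.cosh (b * t)) / θ) / 2 := by
    intro t ht
    set e := Real.exp (-x * Real.cosh t) with he
    have hep : 0 < e := Real.exp_pos _
    set u := e * Real.cosh (a * t) with hu
    set v := e * Real.cosh (b * t) with hv
    have hup : 0 < u := by positivity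
    have hvp : 0 < v := by positivity
    have key : (e * Real.cosh ((a + b) / 2 * t)) ^ 2 < u * v := by
      have h1 : Real.cosh (a * t) * Real.cosh (b * t)
          = (Real.cosh (a * t + b * t) + Real.cosh (a * t - b * t)) / 2 :=
        cosh_mul_cosh _ _
      have h2 : Real.cosh ((a + b) / 2 * t) ^ 2
          = (Real.cosh (a * t + b * t) + 1) / 2 := by
        have := cosh_mul_cosh ((a + b) / 2 * t) ((a + b) / 2 * t)
        have harg : (a + b) / 2 * t + (a + b) / 2 * t = a * t + b * t := by ring
        rw [harg, sub_self, Real.cosh_zero] at this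
        rw [sq, this]
      have h3 : 1 < Real.cosh (a * t - b * t) := by
        rw [Real.one_lt_cosh]
        have : a * t - b * t = (a - b) * t := by ring
        rw [this]
        exact mul_ne_zero (sub_ne_zero.2 hab) (ne_of_gt ht)
      rw [hu, hv]
      calc (e * Real.cosh ((a + b) / 2 * t)) ^ 2
          = e ^ 2 * ((Real.cosh (a * t + b * t) + 1) / 2) := by rw [mul_pow, h2]
        _ < e ^ 2 * ((Real.cosh (a * t + b * t) + Real.cosh (a * t - b * t)) / 2) := by
            apply mul_lt_mul_of_pos_left _ (by positivity)
            linarith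
        _ = e * Real.cosh (a * t) * (e * Real.cosh (b * t)) := by rw [← h1]; ring
    have hsq : e * Real.cosh ((a + b) / 2 * t) < Real.sqrt (u * v) := by
      rw [show u * v = Real.sqrt (u*v) ^ 2 from (Real.sq_sqrt (by positivity)).symm] at key
      have h0 : 0 ≤ e * Real.cosh ((a + b) / 2 * t) := by positivity
      nlinarith [Real.sqrt_nonneg (u * v)]
    have hamgm : Real.sqrt (u * v) ≤ (θ * u + v / θ) / 2 := by
      have hpq : Real.sqrt (u * v) = Real.sqrt u * Real.sqrt v := Real.sqrt_mul hup.le v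
      have hp : Real.sqrt u ^ 2 = u := Real.sq_sqrt hup.le
      have hq : Real.sqrt v ^ 2 = v := Real.sq_sqrt hvp.le
      have key2 : (θ * u + v / θ) / 2 = (θ ^ 2 * u + v) / (2 * θ) := by
        field_simp
      rw [hpq, key2, le_div_iff₀ (by positivity)]
      nlinarith [sq_nonneg (θ * Real.sqrt u - Real.sqrt v), hp, hq, Real.sqrt_nonneg u,
        Real.sqrt_nonneg v]
    calc e * Real.cosh ((a + b) / 2 * t) < Real.sqrt (u * v) := hsq
      _ ≤ (θ * u + v / θ) / 2 := hamgm
      _ = (θ * (e * Real.cosh (a * t)) + e * Real.cosh (b * t) / θ) / 2 := by rw [hu, hv]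
  -- integrate
  have hia := besselK_integrand_integrableOn a x hx
  have hib := besselK_integrand_integrableOn b x hx
  have him := besselK_integrand_integrableOn ((a + b) / 2) x hx
  have hig : IntegrableOn (fun t => (θ * (Real.exp (-x * Real.cosh t) * Real.cosh (a * t))
      + (Real.exp (-x * Real.cosh t) * Real.cosh (b * t)) / θ) / 2) (Ioi 0) :=
    (((hia.const_mul θ).add (hib.div_const θ)).div_const 2)
  have hlt := setIntegral_lt_of_lt_on him hig hpt
  have heval : (∫ t in Ioi (0:ℝ), (θ * (Real.exp (-x * Real.cosh t) * Real.cosh (a * t))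
      + (Real.exp (-x * Real.cosh t) * Real.cosh (b * t)) / θ) / 2)
      = (θ * Ka + Kb / θ) / 2 := by
    rw [MeasureTheory.integral_div, MeasureTheory.integral_add (hia.const_mul θ) (hib.div_const θ),
      MeasureTheory.integral_const_mul, MeasureTheory.integral_div]
    rfl
  rw [heval] at hlt
  have hKm : besselK ((a + b) / 2) x < (θ * Ka + Kb / θ) / 2 := hlt
  have hθKa : θ * Ka = Real.sqrt Kb * Real.sqrt Ka := by
    rw [hθdef, Real.sqrt_div hKbp.le, div_mul_eq_mul_div, mul_div_assoc, Real.div_sqrt]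
  have hKbθ : Kb / θ = Real.sqrt Kb * Real.sqrt Ka := by
    rw [hθdef, Real.sqrt_div hKbp.le, div_div_eq_mul_div, mul_div_right_comm, Real.div_sqrt]
  have hfin : besselK ((a + b) / 2) x < Real.sqrt (Ka * Kb) := by
    rw [Real.sqrt_mul hKap.le, mul_comm (Real.sqrt Ka)]
    calc besselK ((a + b) / 2) x < (θ * Ka + Kb / θ) / 2 := hKm
      _ = Real.sqrt Kb * Real.sqrt Ka := by rw [hθKa, hKbθ]; ring
  exact (Real.lt_sqrt (besselK_pos _ _ hx).le).1 hfin

lemma tendsto_bound_zero (ν x : ℝ) (hx : 0 < x) :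
    Tendsto (fun t : ℝ => Real.exp (-(x/2)) * Real.exp (|ν| * t - x/8 * t ^ 2))
      atTop (nhds 0) := by
  rw [show (0:ℝ) = Real.exp (-(x/2)) * 0 by ring]
  apply Tendsto.const_mul
  apply Real.tendsto_exp_atBot.comp
  have h1 : Tendsto (fun t : ℝ => x/8 * t) atTop atTop :=
    Tendsto.const_mul_atTop (by positivity) tendsto_id
  have h2 : Tendsto (fun t : ℝ => |ν| + -(x/8 * t)) atTop atBot :=
    tendsto_atBot_add_const_left atTop (|ν|) (tendsto_neg_atTop_atBot.comp h1)
  have h3 := Filter.Tendsto.atTop_mul_atBot₀ (tendsto_id (α := ℝ)) h2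
  exact h3.congr fun t => by simp only [id_eq]; ring

lemma besselK_recurrence (ν x : ℝ) (hx : 0 < x) :
    2 * ν * besselK ν x = x * (besselK (ν + 1) x - besselK (ν - 1) x) := by
  set f : ℝ → ℝ := fun t => Real.exp (-x * Real.cosh t) * Real.sinh (ν * t) with hf
  set f' : ℝ → ℝ := fun t =>
    ν * (Real.exp (-x * Real.cosh t) * Real.cosh (ν * t))
    - x/2 * (Real.exp (-x * Real.cosh t) * Real.cosh ((ν+1) * t))
    + x/2 * (Real.exp (-x * Real.cosh t) * Real.cosh ((ν-1) * t)) with hf'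
  have hderiv : ∀ t ∈ Ici (0:ℝ), HasDerivAt f (f' t) t := by
    intro t _
    have h1 : HasDerivAt (fun t => Real.exp (-x * Real.cosh t))
        (Real.exp (-x * Real.cosh t) * (-x * Real.sinh t)) t := by
      have := ((Real.hasDerivAt_cosh t).const_mul (-x)).exp
      simpa [mul_comm] using this
    have h2 : HasDerivAt (fun t => Real.sinh (ν * t)) (Real.cosh (ν * t) * ν) t := by
      simpa using ((hasDerivAt_id t).const_mul ν).sinh
    have := h1.mul h2
    refine (this.congr_deriv ?_).congr_of_eventuallyEq (Eventually.of_forall fun _ => rfl)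
    symm
    have hs : Real.sinh t * Real.sinh (ν * t)
        = (Real.cosh ((ν+1) * t) - Real.cosh ((ν-1) * t)) / 2 := by
      have := sinh_mul_sinh (ν * t) t
      have e1 : ν * t + t = (ν + 1) * t := by ring
      have e2 : ν * t - t = (ν - 1) * t := by ring
      rw [e1, e2] at this
      linarith [this]
    simp only [hf']
    linear_combination (x * Real.exp (-x * Real.cosh t)) * hs
  have hint : IntegrableOn f' (Ioi 0) := by
    apply Integrable.add
    apply Integrable.sub
    · exact (besselK_integrand_integrableOn ν x hx).const_mul _
    · exact (besselK_integrand_integrableOn (ν+1) x hx).const_mul _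
    · exact (besselK_integrand_integrableOn (ν-1) x hx).const_mul _
  have htend : Tendsto f atTop (nhds 0) := by
    apply squeeze_zero_norm' _ (tendsto_bound_zero ν x hx)
    filter_upwards [eventually_ge_atTop (0:ℝ)] with t ht
    have h1 : |Real.sinh (ν * t)| ≤ Real.cosh (ν * t) := by
      rw [Real.abs_sinh]
      calc Real.sinh |ν * t| ≤ Real.cosh |ν * t| := by
            have := Real.exp_pos (-|ν * t|)
            rw [Real.sinh_eq, Real.cosh_eq]; linarith
        _ = Real.cosh (ν * t) := by rw [Real.cosh_abs]
    calc ‖f t‖ = Real.exp (-x * Real.cosh t) * |Real.sinh (ν * t)| := by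
          rw [hf]; simp [abs_mul, abs_of_pos (Real.exp_pos _)]
      _ ≤ Real.exp (-x * Real.cosh t) * Real.cosh (ν * t) :=
          mul_le_mul_of_nonneg_left h1 (Real.exp_pos _).le
      _ ≤ Real.exp (-(x/2)) * Real.exp (|ν| * t - x/8 * t ^ 2) :=
          besselK_integrand_le ν x hx ht
  have key := integral_Ioi_of_hasDerivAt_of_tendsto' hderiv hint htend
  have hf0 : f 0 = 0 := by simp [hf]
  rw [hf0, sub_zero] at key
  have hsplit : ∫ t in Ioi (0:ℝ), f' t
      = ν * besselK ν x - x/2 * besselK (ν+1) x + x/2 * besselK (ν-1) x := by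
    simp only [hf']
    have g1 := (besselK_integrand_integrableOn ν x hx).const_mul ν
    have g2 := (besselK_integrand_integrableOn (ν+1) x hx).const_mul (x/2)
    have g3 := (besselK_integrand_integrableOn (ν-1) x hx).const_mul (x/2)
    have g12 : IntegrableOn (fun t =>
        ν * (Real.exp (-x * Real.cosh t) * Real.cosh (ν * t))
        - x/2 * (Real.exp (-x * Real.cosh t) * Real.cosh ((ν+1) * t))) (Ioi 0) := g1.sub g2
    rw [MeasureTheory.integral_add g12 g3, MeasureTheory.integral_sub g1 g2,
      MeasureTheory.integral_const_mul, MeasureTheory.integral_const_mul,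
      MeasureTheory.integral_const_mul]
    rfl
  rw [key] at hsplit
  linarith [hsplit]

lemma besselK_hasDerivAt (ν x : ℝ) (hx : 0 < x) :
    HasDerivAt (fun y => besselK ν y)
      (-(besselK (ν + 1) x + besselK (ν - 1) x) / 2) x := by
  have hb : IntegrableOn (fun t : ℝ =>
      Real.cosh t * (Real.exp (-(x/2) * Real.cosh t) * Real.cosh (ν * t))) (Ioi 0) := by
    have h1 := besselK_integrand_integrableOn (ν+1) (x/2) (by linarith)
    have h2 := besselK_integrand_integrableOn (ν-1) (x/2) (by linarith)
    have heq : (fun t : ℝ => Real.cosh t * (Real.exp (-(x/2) * Real.cosh t) * Real.cosh (ν * t)))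
        = fun t => (1/2) * (Real.exp (-(x/2) * Real.cosh t) * Real.cosh ((ν+1) * t))
          + (1/2) * (Real.exp (-(x/2) * Real.cosh t) * Real.cosh ((ν-1) * t)) := by
      funext t
      have := cosh_mul_cosh (ν * t) t
      have e1 : ν * t + t = (ν + 1) * t := by ring
      have e2 : ν * t - t = (ν - 1) * t := by ring
      rw [e1, e2] at this
      linear_combination (Real.exp (-(x/2) * Real.cosh t)) * this
    rw [heq]
    exact (h1.const_mul _).add (h2.const_mul _)
  have key := hasDerivAt_integral_of_dominated_loc_of_deriv_le
    (F := fun y t => Real.exp (-y * Real.cosh t) * Real.cosh (ν * t))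
    (F' := fun y t => -(Real.cosh t) * (Real.exp (-y * Real.cosh t) * Real.cosh (ν * t)))
    (x₀ := x) (s := Metric.ball x (x/2))
    (bound := fun t => Real.cosh t * (Real.exp (-(x/2) * Real.cosh t) * Real.cosh (ν * t)))
    (μ := volume.restrict (Ioi 0)) (Metric.ball_mem_nhds x (by linarith))
    (Eventually.of_forall fun y => (((Real.continuous_exp.comp
      (continuous_const.mul Real.continuous_cosh)).mul
      (Real.continuous_cosh.comp (continuous_const.mul continuous_id))).aestronglyMeasurable))
    (besselK_integrand_integrableOn ν x hx)
    (((Real.continuous_cosh.neg).mul ((Real.continuous_exp.comp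
      (continuous_const.mul Real.continuous_cosh)).mul
      (Real.continuous_cosh.comp (continuous_const.mul continuous_id)))).aestronglyMeasurable)
    ?_ hb ?_
  · have h2 : (∫ t in Ioi (0:ℝ),
        -(Real.cosh t) * (Real.exp (-x * Real.cosh t) * Real.cosh (ν * t)))
        = -(besselK (ν + 1) x + besselK (ν - 1) x) / 2 := by
      have heq : (fun t : ℝ => -(Real.cosh t) * (Real.exp (-x * Real.cosh t) * Real.cosh (ν * t)))
          = fun t => (-(1/2)) * (Real.exp (-x * Real.cosh t) * Real.cosh ((ν+1) * t))
            + (-(1/2)) * (Real.exp (-x * Real.cosh t) * Real.cosh ((ν-1) * t)) := by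
        funext t
        have := cosh_mul_cosh (ν * t) t
        have e1 : ν * t + t = (ν + 1) * t := by ring
        have e2 : ν * t - t = (ν - 1) * t := by ring
        rw [e1, e2] at this
        linear_combination (-(Real.exp (-x * Real.cosh t))) * this
      rw [heq, MeasureTheory.integral_add
        (((besselK_integrand_integrableOn (ν+1) x hx)).const_mul _)
        (((besselK_integrand_integrableOn (ν-1) x hx)).const_mul _),
        MeasureTheory.integral_const_mul, MeasureTheory.integral_const_mul]
      show -(1/2) * besselK (ν+1) x + -(1/2) * besselK (ν-1) x = _
      ring
    rw [← h2]
    exact key.2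
  · -- bound
    filter_upwards [ae_restrict_mem measurableSet_Ioi] with t ht y hy
    have htc : 0 < Real.cosh t := Real.cosh_pos t
    have hνc : 0 < Real.cosh (ν * t) := Real.cosh_pos (ν * t)
    have hnn : (0:ℝ) ≤ Real.cosh t * (Real.exp (-y * Real.cosh t) * Real.cosh (ν * t)) := by
      positivity
    rw [Real.norm_eq_abs, abs_of_nonpos (by linarith)]
    have hy2 : x/2 ≤ y := by
      rw [Metric.mem_ball, Real.dist_eq, abs_lt] at hy
      linarith [hy.1]
    have hee : Real.exp (-y * Real.cosh t) ≤ Real.exp (-(x/2) * Real.cosh t) := by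
      apply Real.exp_le_exp.2
      nlinarith
    have b1 := mul_le_mul_of_nonneg_right hee hνc.le
    have b2 := mul_le_mul_of_nonneg_left b1 htc.le
    linarith [b2]
  · -- differentiability
    filter_upwards with t y _
    have h1 : HasDerivAt (fun y : ℝ => -y * Real.cosh t) (-(Real.cosh t)) y := by
      simpa using ((hasDerivAt_id y).neg.mul_const (Real.cosh t))
    have := (h1.exp).mul_const (Real.cosh (ν * t))
    refine this.congr_deriv ?_
    ring

lemma quad_sign (c y t : ℝ) (hy : 0 < y) (ht : 0 < t) :
    (y * t^2 - 2*c*t - y < 0 ↔ t < (c + Real.sqrt (c^2 + y^2)) / y) ∧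
    (0 < y * t^2 - 2*c*t - y ↔ (c + Real.sqrt (c^2 + y^2)) / y < t) := by
  set s := Real.sqrt (c^2 + y^2) with hs
  have hs2 : s^2 = c^2 + y^2 := Real.sq_sqrt (by positivity)
  have hcs : c < s := by
    have h1 : Real.sqrt (c^2) < s := Real.sqrt_lt_sqrt (by positivity) (by nlinarith)
    calc c ≤ |c| := le_abs_self c
      _ = Real.sqrt (c^2) := (Real.sqrt_sq_eq_abs c).symm
      _ < s := h1
  have hfac : y * (y * t^2 - 2*c*t - y) = (y*t - (c+s)) * (y*t - (c-s)) := by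
    linear_combination hs2
  have hpos2 : 0 < y*t - (c - s) := by nlinarith
  constructor
  · constructor
    · intro h
      rw [lt_div_iff₀ hy]
      nlinarith
    · intro h
      rw [lt_div_iff₀ hy] at h
      nlinarith
  · constructor
    · intro h
      rw [div_lt_iff₀ hy]
      nlinarith
    · intro h
      rw [div_lt_iff₀ hy] at h
      nlinarith

lemma besselK_ratio_lt_upper (ν x : ℝ) (hx : 0 < x) :
    besselK ν x / besselK (ν - 1) x < (ν + Real.sqrt (ν^2 + x^2)) / x := by
  have hN := besselK_pos ν x hx
  have hD := besselK_pos (ν - 1) x hx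
  have htur := besselK_turan (ν+1) (ν-1) x hx (by intro h; linarith [congrArg id h])
  rw [show ((ν+1) + (ν-1))/2 = ν by ring] at htur
  have hrec := besselK_recurrence ν x hx
  set N := besselK ν x
  set D := besselK (ν-1) x
  set Kp := besselK (ν+1) x
  have hquad : x * (N/D)^2 - 2*ν*(N/D) - x < 0 := by
    have hkey : x * N^2 - 2*ν*N*D - x*D^2 < 0 := by nlinarith
    have hD2 : 0 < D^2 := by positivity
    rw [div_pow]
    rw [show x * (N^2/D^2) - 2*ν*(N/D) - x = (x*N^2 - 2*ν*N*D - x*D^2)/D^2 by field_simp]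
    exact div_neg_of_neg_of_pos hkey hD2
  exact ((quad_sign ν x (N/D) hx (by positivity)).1).1 hquad

lemma besselK_ratio_gt_lower (ν x : ℝ) (hx : 0 < x) :
    (ν - 1 + Real.sqrt ((ν-1)^2 + x^2)) / x < besselK ν x / besselK (ν - 1) x := by
  have hN := besselK_pos ν x hx
  have hD := besselK_pos (ν - 1) x hx
  have htur := besselK_turan ν (ν-2) x hx (by intro h; linarith [congrArg id h])
  rw [show (ν + (ν-2))/2 = ν - 1 by ring] at htur
  have hrec := besselK_recurrence (ν-1) x hx
  rw [show ν-1+1 = ν by ring, show ν-1-1 = ν-2 by ring] at hrec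
  set N := besselK ν x
  set D := besselK (ν-1) x
  set Km := besselK (ν-2) x
  have hquad : 0 < x * (N/D)^2 - 2*(ν-1)*(N/D) - x := by
    have hkey : 0 < x * N^2 - 2*(ν-1)*N*D - x*D^2 := by nlinarith
    have hD2 : 0 < D^2 := by positivity
    rw [div_pow]
    rw [show x * (N^2/D^2) - 2*(ν-1)*(N/D) - x = (x*N^2 - 2*(ν-1)*N*D - x*D^2)/D^2 by
      field_simp]
    exact div_pos hkey hD2
  exact ((quad_sign (ν-1) x (N/D) hx (by positivity)).2).1 hquad

lemma ratio_hasDerivAt (ν : ℝ) {y : ℝ} (hy : 0 < y) :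
    HasDerivAt (fun z => besselK ν z / besselK (ν-1) z)
      ((besselK ν y / besselK (ν-1) y)^2
        - (2*ν-1)/y * (besselK ν y / besselK (ν-1) y) - 1) y := by
  have hN := besselK_hasDerivAt ν y hy
  have hD := besselK_hasDerivAt (ν-1) y hy
  rw [show ν-1+1 = ν by ring, show ν-1-1 = ν-2 by ring] at hD
  have hDpos := besselK_pos (ν-1) y hy
  have hNpos := besselK_pos ν y hy
  have rec1 := besselK_recurrence ν y hy
  have rec2 := besselK_recurrence (ν-1) y hy
  rw [show ν-1+1 = ν by ring, show ν-1-1 = ν-2 by ring] at rec2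
  have h := hN.div hD hDpos.ne'
  refine h.congr_deriv ?_
  set N := besselK ν y
  set D := besselK (ν-1) y
  set Kp := besselK (ν+1) y
  set Km := besselK (ν-2) y
  have hKp : Kp = 2*ν/y*N + D := by field_simp; linarith
  have hKm : Km = N - 2*(ν-1)/y*D := by field_simp; linarith
  rw [hKp, hKm]
  field_simp
  ring

section lam
variable {c : ℝ} (hc : 0 < c)

noncomputable def lam (c z : ℝ) : ℝ := (c + Real.sqrt (c^2 + z^2)) / z

noncomputable def lamd (c z : ℝ) : ℝ :=
  (2*z / (2*Real.sqrt (c^2+z^2)) * z - (c + Real.sqrt (c^2+z^2))) / z^2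

lemma sqrt_pos_aux (z : ℝ) (hz : 0 < z) : 0 < Real.sqrt (c^2 + z^2) :=
  Real.sqrt_pos.2 (by positivity)

lemma sq_sqrt_aux (z : ℝ) : Real.sqrt (c^2 + z^2) ^ 2 = c^2 + z^2 :=
  Real.sq_sqrt (by positivity)

lemma lam_hasDerivAt {z : ℝ} (hz : 0 < z) : HasDerivAt (lam c) (lamd c z) z := by
  have inner : HasDerivAt (fun w : ℝ => c^2 + w^2) (2*z) z := by
    simpa using (hasDerivAt_pow 2 z).const_add (c^2)
  have hs : HasDerivAt (fun w : ℝ => Real.sqrt (c^2 + w^2))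
      (2*z / (2*Real.sqrt (c^2+z^2))) z := inner.sqrt (by positivity)
  have hu := hs.const_add c
  have := hu.div (hasDerivAt_id z) hz.ne'
  refine this.congr_deriv ?_
  simp [lamd]

lemma lam_deriv_neg (hc : 0 < c) {z : ℝ} (hz : 0 < z) : lamd c z < 0 := by
  have hsp := sqrt_pos_aux (c := c) z hz
  have hs2 := sq_sqrt_aux (c := c) z
  rw [lamd, show 2*z / (2*Real.sqrt (c^2+z^2)) * z = z^2 / Real.sqrt (c^2+z^2) by
    field_simp]
  apply div_neg_of_neg_of_pos _ (by positivity)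
  have : z^2 / Real.sqrt (c^2+z^2) < c + Real.sqrt (c^2+z^2) := by
    rw [div_lt_iff₀ hsp]
    nlinarith
  linarith

lemma lam_gt_one (hc : 0 < c) {z : ℝ} (hz : 0 < z) : 1 < lam c z := by
  rw [lam, lt_div_iff₀ hz]
  have : z < Real.sqrt (c^2 + z^2) := by
    have h1 : Real.sqrt (z^2) < Real.sqrt (c^2 + z^2) :=
      Real.sqrt_lt_sqrt (by positivity) (by nlinarith)
    rwa [Real.sqrt_sq hz.le] at h1
  linarith

lemma lam_nullcline {z : ℝ} (hz : 0 < z) : z * (lam c z)^2 - 2*c*(lam c z) - z = 0 := by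
  have hs2 := sq_sqrt_aux (c := c) z
  rw [lam]
  field_simp
  nlinarith [hs2]

end lam

lemma besselK_ratio_lt_mid (ν x : ℝ) (hx : 0 < x) (hν : 1/2 < ν) :
    besselK ν x / besselK (ν - 1) x < (ν - 1/2 + Real.sqrt ((ν - 1/2)^2 + x^2)) / x := by
  set c : ℝ := ν - 1/2 with hcdef
  have hc : 0 < c := by simp [hcdef]; linarith
  set r : ℝ → ℝ := fun z => besselK ν z / besselK (ν-1) z with hrdef
  have h2c : (2*ν - 1) = 2*c := by rw [hcdef]; ring
  -- r has derivative r z ^2 - 2c/z r z - 1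
  have hr' : ∀ {z : ℝ}, 0 < z → HasDerivAt r (r z^2 - 2*c/z * r z - 1) z := by
    intro z hz
    have := ratio_hasDerivAt ν hz
    rw [show (2*ν-1)/z = 2*c/z by rw [h2c]] at this
    exact this
  have hrpos : ∀ {z : ℝ}, 0 < z → 0 < r z := fun hz =>
    div_pos (besselK_pos _ _ hz) (besselK_pos _ _ hz)
  show r x < lam c x
  by_contra hcon
  push_neg at hcon  -- lam c x ≤ r x
  -- Step A : moving barrier
  have stepA : ∀ y, x ≤ y → lam c y ≤ r y := by
    intro y₂ hy₂
    by_contra hlt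
    push_neg at hlt  -- r y₂ < lam c y₂
    have hxy : x < y₂ := by
      rcases eq_or_lt_of_le hy₂ with h | h
      · exfalso; rw [← h] at hlt; linarith
      · exact h
    set d : ℝ → ℝ := fun z => r z - lam c z with hddef
    have hd' : ∀ {z : ℝ}, 0 < z → HasDerivAt d
        ((r z^2 - 2*c/z * r z - 1) - lamd c z) z :=
      fun hz => (hr' hz).sub (lam_hasDerivAt hz)
    have hdcont : ∀ {z : ℝ}, 0 < z → ContinuousAt d z := fun hz => (hd' hz).continuousAt
    set S : Set ℝ := Icc x y₂ ∩ d ⁻¹' (Ici 0) with hSdef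
    have hScl : IsClosed S := by
      apply ContinuousOn.preimage_isClosed_of_isClosed _ isClosed_Icc isClosed_Ici
      intro z hz
      exact (hdcont (lt_of_lt_of_le hx hz.1)).continuousWithinAt
    have hScomp : IsCompact S :=
      isCompact_Icc.of_isClosed_subset hScl inter_subset_left
    have hSne : S.Nonempty := ⟨x, ⟨le_refl x, hxy.le⟩, by
      simp only [mem_preimage, mem_Ici, hddef]
      linarith⟩
    set s := sSup S with hsdef
    have hsS : s ∈ S := hScomp.sSup_mem hSne
    have hxs : x ≤ s := hsS.1.1
    have hsy : s ≤ y₂ := hsS.1.2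
    have hspos : 0 < s := lt_of_lt_of_le hx hxs
    have hds : 0 ≤ d s := hsS.2
    have hslt : s < y₂ := by
      rcases eq_or_lt_of_le hsy with h | h
      · exfalso
        have : d y₂ < 0 := by simp only [hddef]; linarith
        rw [h] at hds; linarith
      · exact h
    have hmax : ∀ z ∈ S, z ≤ s := fun z hz => le_csSup hScomp.bddAbove hz
    have hneg : ∀ z, s < z → z ≤ y₂ → d z < 0 := by
      intro z h1 h2
      by_contra h
      push_neg at h
      have hzS : z ∈ S := ⟨⟨le_trans hxs h1.le, h2⟩, h⟩
      linarith [hmax z hzS]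
    -- d s ≤ 0 by right continuity
    have hds0 : d s ≤ 0 := by
      have htend : Tendsto d (nhdsWithin s (Ioi s)) (nhds (d s)) :=
        ((hdcont hspos).continuousWithinAt).tendsto
      apply le_of_tendsto htend
      filter_upwards [Ioc_mem_nhdsGT_of_mem (⟨le_refl s, hslt⟩ : s ∈ Ico s y₂)] with z hz
      exact (hneg z hz.1 hz.2).le
    have hdseq : d s = 0 := le_antisymm hds0 hds
    have hrs : r s = lam c s := by
      have : r s - lam c s = 0 := hdseq
      linarith
    -- derivative of d at s is positive
    have hr's : (r s^2 - 2*c/s * r s - 1) = 0 := by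
      have hnc := lam_nullcline (c := c) hspos
      rw [← hrs] at hnc
      have : r s^2 - 2*c/s * r s - 1 = (s * r s^2 - 2*c*(r s) - s)/s := by
        field_simp
      rw [this, hnc, zero_div]
    have hdd : HasDerivAt d (-(lamd c s)) s := by
      have := hd' hspos
      rw [hr's, zero_sub] at this
      exact this
    have hddpos : 0 < -(lamd c s) := by linarith [lam_deriv_neg (c := c) hc hspos]
    -- slope argument
    have hslope := hasDerivAt_iff_tendsto_slope.1 hdd
    have hmono : nhdsWithin s (Ioi s) ≤ nhdsWithin s {s}ᶜ :=
      nhdsWithin_mono s (fun z hz => (LT.lt.ne' hz : z ≠ s))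
    have hev1 : ∀ᶠ z in nhdsWithin s (Ioi s), 0 < slope d s z :=
      (hslope.mono_left hmono).eventually (eventually_gt_nhds hddpos)
    have hev2 : ∀ᶠ z in nhdsWithin s (Ioi s), z ∈ Ioc s y₂ :=
      Ioc_mem_nhdsGT_of_mem (⟨le_refl s, hslt⟩ : s ∈ Ico s y₂)
    obtain ⟨z, hz1, hz2⟩ := (hev1.and hev2).exists
    have hdz : 0 < d z := by
      rw [slope_def_field] at hz1
      have hzs : 0 < z - s := by linarith [hz2.1]
      have h3 := mul_pos hz1 hzs
      rw [div_mul_cancel₀ _ (ne_of_gt hzs)] at h3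
      linarith [hdseq]
    exact absurd hdz (not_lt.2 (hneg z hz2.1 hz2.2).le)
  -- Step B : r is monotone on Ici x
  have stepB : MonotoneOn r (Ici x) := by
    apply monotoneOn_of_deriv_nonneg (convex_Ici x)
    · intro z hz
      exact (hr' (lt_of_lt_of_le hx hz)).continuousAt.continuousWithinAt
    · intro z hz
      rw [interior_Ici] at hz
      exact (hr' (lt_trans hx hz)).differentiableAt.differentiableWithinAt
    · intro z hz
      rw [interior_Ici] at hz
      have hzpos : 0 < z := lt_trans hx hz
      rw [(hr' hzpos).deriv]
      have hlam := stepA z (le_of_lt hz)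
      have hnotlt : ¬ (r z < lam c z) := not_lt.2 hlam
      have hq := (quad_sign c z (r z) hzpos (hrpos hzpos)).1
      have h0 : 0 ≤ z * r z^2 - 2*c*(r z) - z := by
        by_contra hneg2
        push_neg at hneg2
        exact hnotlt (hq.1 hneg2)
      have heq : r z^2 - 2*c/z * r z - 1 = (z * r z^2 - 2*c*(r z) - z)/z := by
        field_simp
      rw [heq]
      exact div_nonneg h0 hzpos.le
  -- Step C : contradiction with the upper bound at large y
  have hδ : 0 < lam c x - 1 := by linarith [lam_gt_one (c := c) hc hx]
  set δ := lam c x - 1 with hδdef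
  set y₃ := max x (2*ν/δ) with hy₃def
  have hy₃x : x ≤ y₃ := le_max_left _ _
  have hy₃pos : 0 < y₃ := lt_of_lt_of_le hx hy₃x
  have hνpos : 0 < ν := by linarith
  have hub := besselK_ratio_lt_upper ν y₃ hy₃pos
  have hsq : Real.sqrt (ν^2 + y₃^2) ≤ ν + y₃ := by
    have h1 : Real.sqrt (ν^2+y₃^2) ≤ Real.sqrt ((ν+y₃)^2) :=
      Real.sqrt_le_sqrt (by nlinarith)
    rwa [Real.sqrt_sq (by positivity)] at h1
  have h1 : r y₃ < 1 + 2*ν/y₃ := by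
    calc r y₃ < (ν + Real.sqrt (ν^2 + y₃^2)) / y₃ := hub
      _ ≤ (ν + (ν + y₃))/y₃ := by gcongr
      _ = 1 + 2*ν/y₃ := by field_simp; ring
  have h2 : 2*ν/y₃ ≤ δ := by
    rw [div_le_iff₀ hy₃pos]
    have hm : 2*ν/δ ≤ y₃ := le_max_right x (2*ν/δ)
    rw [div_le_iff₀ hδ] at hm
    linarith
  have h3 : lam c x ≤ r y₃ := le_trans hcon (stepB self_mem_Ici (mem_Ici.2 hy₃x) hy₃x)
  linarith

theorem besselK_ratio_nullcline_bounds (ν x : ℝ) (hx : 0 < x) :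
    (besselK ν x / besselK (ν - 1) x < (ν + Real.sqrt (ν ^ 2 + x ^ 2)) / x) ∧
    (1 / 2 < ν →
      besselK ν x / besselK (ν - 1) x <
        (ν - 1 / 2 + Real.sqrt ((ν - 1 / 2) ^ 2 + x ^ 2)) / x) ∧
    (besselK ν x / besselK (ν - 1) x >
      (ν - 1 + Real.sqrt ((ν - 1) ^ 2 + x ^ 2)) / x) ∧
    (ν = 1 / 2 →
      besselK ν x / besselK (ν - 1) x = 1 ∧
      (ν - 1 / 2 + Real.sqrt ((ν - 1 / 2) ^ 2 + x ^ 2)) / x = 1) := by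
  refine ⟨besselK_ratio_lt_upper ν x hx, fun hν => besselK_ratio_lt_mid ν x hx hν,
    besselK_ratio_gt_lower ν x hx, fun hν => ⟨?_, ?_⟩⟩
  · have hKeq : besselK (ν - 1) x = besselK ν x := by
      subst hν
      unfold besselK
      congr 1
      funext t
      rw [show ((1:ℝ)/2 - 1) * t = -(1/2 * t) by ring, Real.cosh_neg]
    rw [hKeq, div_self (besselK_pos ν x hx).ne']
  · subst hν
    rw [show (1:ℝ)/2 - 1/2 = 0 by norm_num]
    rw [show ((0:ℝ))^2 + x^2 = x^2 by ring]
    rw [Real.sqrt_sq hx.le, zero_add, div_self hx.ne']
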